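/- arXiv:2210.09195 — 4 statements merged into one kernel-verified Lean document; each statement's English description precedes it below -/
import Mathlib

section
/- Let X be a set and F a vector space of real-valued functions on X of positive finite dimension m. Suppose F is closed under the absolute-value operation ψ ↦ |ψ|. Suppose also there is an m-argument operation Π sending any ψ₁,…,ψ_m ∈ F to a function Π(ψ₁,…,ψ_m) ∈ F which is nonnegative and has exactly the same zero set as the product ψ₁⋯ψ_m. Then there exist a proper subset X₀ of X, a partition {X₁,…,X_m} of X∖X₀, and a basis χ₁,…,χ_m of F such that for each j, χ_j > 0 on X_j and χ_j = 0 on X∖X_j. -/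
/-- Lemma 1.3 (basis lemma): if a finite-dimensional space `F` of functions `X → ℝ`
is closed under absolute value and under an `m`-argument operation `P` producing
nonnegative functions with the same zeros as the product, then there is a proper
subset `X₀`, a partition of `X ∖ X₀`, and a basis of `F` positive on the pieces. -/
theorem stmt0 {X : Type*} (m : ℕ) (hm : 0 < m)
    (F : Submodule ℝ (X → ℝ)) (hdim : Module.finrank ℝ F = m)
    (habs : ∀ ψ ∈ F, (fun x => |ψ x|) ∈ F)
    (P : (Fin m → (X → ℝ)) → (X → ℝ))
    (hPmem : ∀ ψ : Fin m → (X → ℝ), (∀ j, ψ j ∈ F) → P ψ ∈ F)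
    (hPnonneg : ∀ ψ : Fin m → (X → ℝ), (∀ j, ψ j ∈ F) → ∀ x, 0 ≤ P ψ x)
    (hPzero : ∀ ψ : Fin m → (X → ℝ), (∀ j, ψ j ∈ F) →
      ∀ x, P ψ x = 0 ↔ (∏ j, ψ j x) = 0) :
    ∃ (X₀ : Set X) (Xs : Fin m → Set X) (χ : Fin m → (X → ℝ)),
      X₀ ≠ Set.univ ∧
      (∀ j, (Xs j).Nonempty) ∧
      Pairwise (Function.onFun Disjoint Xs) ∧
      (⋃ j, Xs j) = Set.univ \ X₀ ∧
      (∀ j, χ j ∈ F) ∧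
      LinearIndependent ℝ χ ∧
      Submodule.span ℝ (Set.range χ) = F ∧
      (∀ j, (∀ x ∈ Xs j, 0 < χ j x) ∧ (∀ x ∉ Xs j, χ j x = 0)) := by
  classical
  have hfd : FiniteDimensional ℝ F := FiniteDimensional.of_finrank_pos (hdim ▸ hm)
  -- evaluation functionals
  set ε : X → Module.Dual ℝ F :=
    fun x => (LinearMap.proj (R := ℝ) (φ := fun _ : X => ℝ) x).comp F.subtype with hε
  have hεapp : ∀ (x : X) (v : F), ε x v = (v : X → ℝ) x := fun _ _ => rfl
  have hspan : Submodule.span ℝ (Set.range ε) = ⊤ := by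
    apply Submodule.span_eq_top_of_ne_zero
    intro z hz
    by_contra hc
    push_neg at hc
    apply hz
    have : (z : X → ℝ) = 0 := funext fun t => hc (ε t) ⟨t, rfl⟩
    exact Subtype.ext this
  obtain ⟨s, hsub, hsp, hli⟩ := exists_linearIndependent ℝ (Set.range ε)
  rw [hspan] at hsp
  set b₀ : Module.Basis s ℝ (Module.Dual ℝ F) :=
    Module.Basis.mk hli (by rw [Subtype.range_coe, hsp]) with hb₀
  have e : s ≃ Fin m :=
    (b₀.indexEquiv (Module.finBasis ℝ (Module.Dual ℝ F))).trans
      (finCongr (by rw [Subspace.dual_finrank_eq, hdim]))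
  set b : Module.Basis (Fin m) ℝ (Module.Dual ℝ F) := b₀.reindex e with hb
  have hbmem : ∀ i, b i ∈ Set.range ε := by
    intro i
    rw [hb, Module.Basis.reindex_apply, hb₀, Module.Basis.mk_apply]
    exact hsub (e.symm i).2
  choose x hx using fun i => hbmem i
  set c : Module.Basis (Fin m) ℝ F := b.dualBasis.map (Module.evalEquiv ℝ F).symm with hc'
  set χ : Fin m → X → ℝ := fun i => ((c i : F) : X → ℝ) with hχ
  have hχF : ∀ j, χ j ∈ F := fun j => (c j).2
  -- evaluation of basis functionals on the predual basis
  have hbc : ∀ i j, b i (c j) = if i = j then 1 else 0 := by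
    intro i j
    have h1 : Module.evalEquiv ℝ F (c j) = b.dualBasis j := by
      rw [hc', Module.Basis.map_apply, LinearEquiv.apply_symm_apply]
    have h2 : Module.evalEquiv ℝ F (c j) (b i) = b i (c j) := rfl
    rw [← h2, h1, b.dualBasis_apply_self]
  have hδ : ∀ i j, χ j (x i) = if i = j then 1 else 0 := by
    intro i j
    have := hbc i j
    rwa [← hx i, hεapp] at this
  -- master identity
  have master : ∀ (v : F) (y : X), (v : X → ℝ) y = ∑ i, b i v * χ i y := by
    intro v y
    have h1 : v = ∑ i, (b i v) • c i := by
      conv_lhs => rw [← c.sum_repr v]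
      refine Finset.sum_congr rfl fun i _ => ?_
      congr 1
      rw [hc', Module.Basis.map_repr, LinearEquiv.symm_symm, LinearEquiv.trans_apply,
        Module.Basis.dualBasis_repr]
      rfl
    calc (v : X → ℝ) y = ((∑ i, (b i v) • c i : F) : X → ℝ) y := by rw [← h1]
      _ = ∑ i, b i v * χ i y := by
          rw [Submodule.coe_sum]
          simp [hχ]
  have hbval : ∀ (i : Fin m) (v : F), b i v = (v : X → ℝ) (x i) := by
    intro i v; rw [← hx i, hεapp]
  -- abs identity
  have habs' : ∀ (v : F) (y : X), |(v : X → ℝ) y| = ∑ i, |(v : X → ℝ) (x i)| * χ i y := by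
    intro v y
    set w : F := ⟨fun t => |(v : X → ℝ) t|, habs _ v.2⟩ with hw
    have := master w y
    simp only [hw] at this
    rw [this]
    refine Finset.sum_congr rfl fun i _ => ?_
    rw [hbval i w]
  -- nonnegativity
  have hnn : ∀ (j : Fin m) (y : X), 0 ≤ χ j y := by
    intro j y
    have := habs' (c j) y
    have h2 : ∀ i, |((c j : F) : X → ℝ) (x i)| = if i = j then 1 else 0 := by
      intro i
      rw [show ((c j : F) : X → ℝ) (x i) = χ j (x i) from rfl, hδ]
      split <;> simp
    rw [show ((c j : F) : X → ℝ) y = χ j y from rfl] at this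
    simp only [h2, ite_mul, one_mul, zero_mul] at this
    rw [Finset.sum_ite_eq' Finset.univ j (fun i => χ i y)] at this
    simp only [Finset.mem_univ, if_true] at this
    rw [← this]
    exact abs_nonneg _
  -- disjointness relation
  have horth : ∀ (j k : Fin m), j ≠ k → ∀ y, χ j y * χ k y = 0 := by
    intro j k hjk y
    have habsid := habs' (c j - c k) y
    have hsub1 : ((c j - c k : F) : X → ℝ) = fun t => χ j t - χ k t := by
      funext t; simp [hχ]
    rw [hsub1] at habsid
    have h2 : ∀ i, |χ j (x i) - χ k (x i)| =
        (if i = j then 1 else 0) + (if i = k then 1 else 0) := by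
      intro i
      rw [hδ, hδ]
      rcases eq_or_ne i j with rfl | hij
      · rw [if_pos rfl, if_neg hjk]; simp
      · rw [if_neg hij]
        rcases eq_or_ne i k with rfl | hik
        · simp
        · rw [if_neg hik]; simp
    simp only [h2, add_mul, ite_mul, one_mul, zero_mul] at habsid
    rw [Finset.sum_add_distrib, Finset.sum_ite_eq' Finset.univ j (fun i => χ i y),
      Finset.sum_ite_eq' Finset.univ k (fun i => χ i y)] at habsid
    simp only [Finset.mem_univ, if_pos] at habsid
    have hsq : (χ j y - χ k y) ^ 2 = (χ j y + χ k y) ^ 2 := by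
      rw [← sq_abs (χ j y - χ k y), habsid]
    nlinarith [hsq]
  have hliχ : LinearIndependent ℝ χ := by
    have heq : χ = (F.subtype : F →ₗ[ℝ] (X → ℝ)) ∘ c := funext fun i => rfl
    rw [heq]
    exact c.linearIndependent.map' F.subtype (Submodule.ker_subtype F)
  have hspanχ : Submodule.span ℝ (Set.range χ) = F := by
    have heq : χ = (F.subtype : F →ₗ[ℝ] (X → ℝ)) ∘ c := funext fun i => rfl
    rw [heq, Set.range_comp, ← Submodule.map_span, c.span_eq, Submodule.map_top,
      Submodule.range_subtype]
  -- forget the construction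
  clear_value χ
  clear hχ master habs' hbval hbc hx hbmem hc' c hb b hb₀ b₀ e hli hsp hsub s hspan hεapp hε ε hfd
  -- assemble
  refine ⟨{y | ∀ j, χ j y = 0}, fun j => {y | 0 < χ j y}, χ, ?_, ?_, ?_, ?_, hχF, ?_, ?_, ?_⟩
  · intro h
    have : (⟨0, hm⟩ : Fin m) ∈ Finset.univ := Finset.mem_univ _
    have h1 : x ⟨0, hm⟩ ∈ ({y | ∀ j, χ j y = 0} : Set X) := h ▸ Set.mem_univ _
    have h2 := h1 ⟨0, hm⟩
    rw [hδ, if_pos rfl] at h2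
    exact one_ne_zero h2
  · intro j
    exact ⟨x j, by simp only [Set.mem_setOf_eq, hδ, if_pos rfl]; norm_num⟩
  · intro j k hjk
    rw [Function.onFun, Set.disjoint_left]
    intro y hyj hyk
    have := horth j k hjk y
    simp only [Set.mem_setOf_eq] at hyj hyk
    nlinarith
  · ext y
    simp only [Set.mem_iUnion, Set.mem_setOf_eq, Set.mem_diff, Set.mem_univ, true_and]
    constructor
    · rintro ⟨j, hj⟩ hall
      rw [hall j] at hj; exact lt_irrefl 0 hj
    · intro hnot
      push_neg at hnot
      obtain ⟨j, hj⟩ := hnot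
      exact ⟨j, lt_of_le_of_ne (hnn j y) (Ne.symm hj)⟩
  · exact hliχ
  · exact hspanχ
  · intro j
    refine ⟨fun x hx => hx, fun y hy => ?_⟩
    simp only [Set.mem_setOf_eq, not_lt] at hy
    exact le_antisymm hy (hnn j y)
end

section
/- Let V be a finite-dimensional real vector space equipped with a nondegenerate symmetric bilinear form ⟨·,·⟩, and let A : V → V be a nonzero ⟨·,·⟩-self-adjoint linear endomorphism. If there exist a real number q with q > 0, q ≠ 1, and a linear isometry B of (V,⟨·,·⟩) such that B A B⁻¹ = q² A, then A is nilpotent. -/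
open Polynomial

lemma coeff_aeval_C_mul_X {R : Type*} [CommRing R] (c : R) (p : R[X]) (i : ℕ) :
    ((aeval (C c * X)) p).coeff i = c ^ i * p.coeff i := by
  induction p using Polynomial.induction_on' with
  | add p q hp hq => simp [hp, hq, mul_add]
  | monomial n a =>
    rw [aeval_monomial, mul_pow, ← C_pow, algebraMap_eq, ← mul_assoc, ← C_mul,
      coeff_C_mul_X_pow, coeff_monomial]
    split_ifs <;> simp_all <;> ring

lemma charpoly_smul_aeval {n : Type*} [Fintype n] [DecidableEq n]
    (M : Matrix n n ℝ) (c : ℝ) :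
    (aeval (C c * X)) (c • M).charpoly = C c ^ (Fintype.card n) * M.charpoly := by
  have hmap : ((Matrix.charmatrix (c • M)).map (aeval (C c * X))) =
      C c • Matrix.charmatrix M := by
    ext i j : 1
    rcases eq_or_ne i j with rfl | h
    · rw [Matrix.map_apply, Matrix.charmatrix_apply_eq, Matrix.smul_apply, Matrix.smul_apply,
        Matrix.charmatrix_apply_eq, map_sub, aeval_X, aeval_C,
        smul_eq_mul, smul_eq_mul, algebraMap_eq, C_mul, mul_sub]
    · rw [Matrix.map_apply, Matrix.charmatrix_apply_ne _ _ _ h, Matrix.smul_apply,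
        Matrix.smul_apply, Matrix.charmatrix_apply_ne _ _ _ h, map_neg, aeval_C,
        smul_eq_mul, smul_eq_mul, algebraMap_eq, C_mul, mul_neg]
  have hdet := RingHom.map_det ((aeval (C c * X) : ℝ[X] →ₐ[ℝ] ℝ[X]).toRingHom)
    (Matrix.charmatrix (c • M))
  simp only [AlgHom.toRingHom_eq_coe, AlgHom.coe_toRingHom, RingHom.coe_coe,
    RingHom.mapMatrix_apply] at hdet
  rw [Matrix.charpoly, hdet, hmap, Matrix.det_smul]
  rfl

/-- If a nonzero self-adjoint endomorphism `A` of a finite-dimensional real vector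
space with a nondegenerate symmetric bilinear form satisfies `B A B⁻¹ = q² A` for
some isometry `B` and some `q > 0`, `q ≠ 1`, then `A` is nilpotent. -/
theorem stmt6 {V : Type*} [AddCommGroup V] [Module ℝ V] [FiniteDimensional ℝ V]
    (Φ : LinearMap.BilinForm ℝ V) (hΦnd : Φ.Nondegenerate) (hΦsymm : Φ.IsSymm)
    (A : V →ₗ[ℝ] V) (hA : A ≠ 0)
    (hsa : ∀ v w, Φ (A v) w = Φ v (A w))
    (q : ℝ) (hq : 0 < q) (hq1 : q ≠ 1)
    (B : V ≃ₗ[ℝ] V) (hBiso : ∀ v w, Φ (B v) (B w) = Φ v w)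
    (hconj : B.toLinearMap ∘ₗ A ∘ₗ B.symm.toLinearMap = q ^ 2 • A) :
    IsNilpotent A := by
  set c : ℝ := q ^ 2 with hc
  have hc0 : 0 < c := by positivity
  have hc1 : c ≠ 1 := by
    intro h
    have : q = 1 := by nlinarith
    exact hq1 this
  have hcinj : Function.Injective fun k : ℕ => c ^ k :=
    pow_right_injective₀ hc0 hc1
  -- similarity: charpoly (c • A) = charpoly A
  have hsim : (c • A).charpoly = A.charpoly := by
    have h : B.conj A = c • A := by rw [← hconj]; rfl
    rw [← h, LinearEquiv.charpoly_conj]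
  have key : (aeval (C c * X)) A.charpoly = C c ^ (Module.finrank ℝ V) * A.charpoly := by
    let b := Module.finBasis ℝ V
    have h1 : ((LinearMap.toMatrix b b) A).charpoly = A.charpoly :=
      LinearMap.charpoly_toMatrix A b
    have h2 : ((LinearMap.toMatrix b b) (c • A)).charpoly = (c • A).charpoly :=
      LinearMap.charpoly_toMatrix (c • A) b
    have h3 := charpoly_smul_aeval ((LinearMap.toMatrix b b) A) c
    rw [← map_smul, h2, hsim, h1, Fintype.card_fin] at h3
    exact h3
  -- coefficient comparison
  have hcoeff : ∀ i, i ≠ Module.finrank ℝ V → A.charpoly.coeff i = 0 := by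
    intro i hi
    have h1 := congrArg (fun p => p.coeff i) key
    simp only [coeff_aeval_C_mul_X, ← C_pow, coeff_C_mul] at h1
    by_contra h0
    exact hi (hcinj (mul_right_cancel₀ h0 h1))
  have hdeg : A.charpoly.natDegree = Module.finrank ℝ V := LinearMap.charpoly_natDegree A
  have hX : A.charpoly = X ^ (Module.finrank ℝ V) := by
    ext i
    rcases eq_or_ne i (Module.finrank ℝ V) with rfl | hi
    · rw [coeff_X_pow, if_pos rfl, ← hdeg, A.charpoly_monic.coeff_natDegree]
    · rw [coeff_X_pow, if_neg hi, hcoeff i hi]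
  exact (LinearMap.isNilpotent_iff_charpoly A).mpr hX
end

section
/- Let f : I → ℝ be a nonconstant C² function on an open interval I with f(t) ≠ 0 for all t, and suppose (|f|^{-1/2})'' = 0 on I. Then there exist real constants ε ≠ 0 and b with b ∉ I such that f(t) = ε (t−b)^{−2} for all t ∈ I. -/
lemma aux_const_of_deriv_zero {s : Set ℝ} (hs : Convex ℝ s) (ho : IsOpen s)
    {h : ℝ → ℝ} (hd : DifferentiableOn ℝ h s) (hz : ∀ x ∈ s, deriv h x = 0)
    {x y : ℝ} (hx : x ∈ s) (hy : y ∈ s) : h x = h y := by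
  refine hs.is_const_of_fderivWithin_eq_zero hd (fun z hz' => ?_) hx hy
  rw [fderivWithin_of_isOpen ho hz']
  ext
  simp [hz z hz']

/-- If `f` is a nonconstant, nowhere-vanishing `C²` function on an open interval `I`
with `(|f|^{-1/2})'' = 0` on `I`, then `f(t) = ε (t - b)⁻²` on `I` for some
constants `ε ≠ 0` and `b ∉ I`. -/
theorem stmt11 (I : Set ℝ) (hIopen : IsOpen I) (hIint : I.OrdConnected)
    (hIne : I.Nonempty) (f : ℝ → ℝ)
    (hC2 : ContDiffOn ℝ 2 f I)
    (hnz : ∀ t ∈ I, f t ≠ 0)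
    (hnc : ¬ ∀ t ∈ I, ∀ s ∈ I, f t = f s)
    (hlin : ∀ t ∈ I, deriv (deriv fun s => |f s| ^ (-(1:ℝ)/2)) t = 0) :
    ∃ ε b : ℝ, ε ≠ 0 ∧ b ∉ I ∧ ∀ t ∈ I, f t = ε * ((t - b) ^ 2)⁻¹ := by
  obtain ⟨t0, ht0⟩ := hIne
  have hconv : Convex ℝ I := convex_iff_ordConnected.2 hIint
  have hcont : ContinuousOn f I := hC2.continuousOn
  -- constant sign
  set c : ℝ := if 0 < f t0 then 1 else -1 with hc
  have hc2 : c = 1 ∨ c = -1 := by unfold c; split <;> simp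
  have hpos : ∀ t ∈ I, 0 < c * f t := by
    intro t ht
    -- f t and f t0 have the same sign
    have same : 0 < f t * f t0 := by
      rcases lt_or_gt_of_ne (mul_ne_zero (hnz t ht) (hnz t0 ht0)) with hlt | hgt
      · exfalso
        have hsub : Set.uIcc t t0 ⊆ I := hIint.uIcc_subset ht ht0
        have : (0:ℝ) ∈ Set.uIcc (f t) (f t0) := by
          rcases mul_neg_iff.1 hlt with ⟨h1, h2⟩ | ⟨h1, h2⟩ <;> rw [Set.mem_uIcc]
          · exact Or.inr ⟨h2.le, h1.le⟩
          · exact Or.inl ⟨h1.le, h2.le⟩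
        obtain ⟨x, hx, hfx⟩ := intermediate_value_uIcc (hcont.mono hsub) this
        exact hnz x (hsub hx) hfx
      · exact hgt
    unfold c
    split
    · rename_i h0
      nlinarith
    · rename_i h0
      push_neg at h0
      have : f t0 < 0 := lt_of_le_of_ne h0 (hnz t0 ht0)
      nlinarith
  have habs : ∀ t ∈ I, |f t| = c * f t := by
    intro t ht
    have hp := hpos t ht
    rcases hc2 with h | h <;> rw [h] at hp ⊢
    · rw [one_mul] at hp ⊢; exact abs_of_pos hp
    · have : f t < 0 := by linarith
      rw [abs_of_neg this]; ring
  -- g = (c*f)^{-1/2} agrees with |f|^{-1/2} on I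
  set G : ℝ → ℝ := fun s => |f s| ^ (-(1:ℝ)/2) with hG
  set g : ℝ → ℝ := fun t => (c * f t) ^ (-(1:ℝ)/2) with hg
  have hgG : ∀ t ∈ I, g t = G t := by
    intro t ht; simp only [hg, hG, habs t ht]
  have hgpos : ∀ t ∈ I, 0 < g t := fun t ht => Real.rpow_pos_of_pos (hpos t ht) _
  -- g is C² on I
  have hgC2 : ContDiffOn ℝ 2 g I := by
    intro t ht
    exact ((contDiffAt_const.mul (hC2.contDiffAt (hIopen.mem_nhds ht))).rpow_const_of_ne
      (ne_of_gt (hpos t ht))).contDiffWithinAt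
  have hgdiff : DifferentiableOn ℝ g I := hgC2.differentiableOn two_ne_zero
  -- deriv g = deriv G on I
  have hderiv_eq : ∀ t ∈ I, deriv g t = deriv G t := by
    intro t ht
    exact Filter.EventuallyEq.deriv_eq
      ((hIopen.eventually_mem ht).mono fun s hs => hgG s hs)
  -- second derivative of g vanishes on I
  have hg2 : ∀ t ∈ I, deriv (deriv g) t = 0 := by
    intro t ht
    have : deriv (deriv g) t = deriv (deriv G) t :=
      Filter.EventuallyEq.deriv_eq
        ((hIopen.eventually_mem ht).mono fun s hs => hderiv_eq s hs)
    rw [this]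
    exact hlin t ht
  -- deriv g is constant on I
  have hg1diff : DifferentiableOn ℝ (deriv g) I :=
    (hgC2.deriv_of_isOpen hIopen one_add_one_eq_two.le : ContDiffOn ℝ 1 (deriv g) I).differentiableOn one_ne_zero
  set a : ℝ := deriv g t0 with ha
  have hgderiv : ∀ t ∈ I, deriv g t = a :=
    fun t ht => aux_const_of_deriv_zero hconv hIopen hg1diff hg2 ht ht0
  -- g is affine on I
  set c0 : ℝ := g t0 - a * t0 with hc0
  have hgaff : ∀ t ∈ I, g t = a * t + c0 := by
    have hhd : DifferentiableOn ℝ (fun t => g t - a * t) I :=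
      hgdiff.sub (differentiableOn_id.const_mul a)
    have hhz : ∀ x ∈ I, deriv (fun t => g t - a * t) x = 0 := by
      intro x hx
      have h1 : HasDerivAt g (deriv g x) x :=
        ((hgdiff x hx).differentiableAt (hIopen.mem_nhds hx)).hasDerivAt
      have h2 : HasDerivAt (fun t => g t - a * t) (deriv g x - a) x :=
        h1.sub ((hasDerivAt_id x).const_mul a |>.congr_deriv (by ring))
      rw [h2.deriv, hgderiv x hx, sub_self]
    intro t ht
    have := aux_const_of_deriv_zero hconv hIopen hhd hhz ht ht0
    beta_reduce at this
    linarith [this]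
  -- recover f from g
  have hfg : ∀ t ∈ I, f t = c * ((g t) ^ 2)⁻¹ := by
    intro t ht
    have hsq : (g t) ^ 2 = (c * f t)⁻¹ := by
      rw [hg]
      rw [← Real.rpow_natCast ((c * f t) ^ (-(1:ℝ)/2)) 2, ← Real.rpow_mul (hpos t ht).le]
      norm_num [Real.rpow_neg_one, mul_inv]
    rw [hsq, inv_inv]
    rcases hc2 with h | h <;> rw [h] <;> ring
  -- a ≠ 0
  have hane : a ≠ 0 := by
    intro ha0
    apply hnc
    intro t ht s hs
    rw [hfg t ht, hfg s hs, hgaff t ht, hgaff s hs, ha0]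
    ring
  refine ⟨c / a ^ 2, -c0 / a, ?_, ?_, ?_⟩
  · have : c ≠ 0 := by rcases hc2 with h | h <;> rw [h] <;> norm_num
    positivity
  · intro hb
    have := hgpos _ hb
    rw [hgaff _ hb] at this
    have h0 : a * (-c0 / a) + c0 = 0 := by field_simp; ring
    linarith
  · intro t ht
    rw [hfg t ht, hgaff t ht]
    have h1 : a * t + c0 = a * (t - -c0 / a) := by field_simp; ring
    rw [h1]
    rw [mul_pow, mul_inv]
    field_simp
end

section
/- Let u be a complete C¹ vector field with flow φ on a connected smooth manifold N, and χ : N → ℝ a C¹ function with dχ(u) = 1 everywhere. Let L = χ⁻¹(c) be a level set of χ for some c in the range of χ. Then the restriction φ : ℝ × L → N is a bijection. -/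
open scoped Manifold

/-- Let `u` be a complete `C¹` vector field with flow `φ` on a connected manifold `N`
and `χ : N → ℝ` a `C¹` function with `dχ(u) = 1` everywhere. Then for any value `c` in
the range of `χ`, the restriction of the flow to `ℝ × L`, where `L = χ⁻¹(c)`, is a
bijection onto `N`. -/
theorem stmt17 {E : Type*} [NormedAddCommGroup E] [NormedSpace ℝ E]
    {H : Type*} [TopologicalSpace H] (I : ModelWithCorners ℝ E H)
    {N : Type*} [TopologicalSpace N] [ChartedSpace H N]
    [IsManifold I (⊤ : ℕ∞) N] [ConnectedSpace N]
    (u : (x : N) → TangentSpace I x)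
    (φ : ℝ → N → N)
    (hφ0 : ∀ x, φ 0 x = x)
    (hφadd : ∀ (s t : ℝ) (x : N), φ (s + t) x = φ s (φ t x))
    (hflow : ∀ x, IsMIntegralCurve (fun τ => φ τ x) u)
    (χ : N → ℝ) (hχ : ContMDiff I 𝓘(ℝ, ℝ) 1 χ)
    (hdχ : ∀ x, mfderiv I 𝓘(ℝ, ℝ) χ x (u x) = (1 : ℝ))
    (c : ℝ) (hc : c ∈ Set.range χ) :
    Function.Bijective (fun p : ℝ × (χ ⁻¹' {c}) => φ p.1 (p.2 : N)) := by
  -- key fact: χ (φ t x) = χ x + t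
  have key : ∀ x t, χ (φ t x) = χ x + t := by
    intro x t
    have hderiv : ∀ τ : ℝ, HasDerivAt (fun σ => χ (φ σ x) - σ) 0 τ := by
      intro τ
      have h1 : HasMFDerivAt 𝓘(ℝ, ℝ) I (fun σ => φ σ x) τ
          ((1 : ℝ →L[ℝ] ℝ).smulRight (u (φ τ x))) := hflow x τ
      have h2 : HasMFDerivAt I 𝓘(ℝ, ℝ) χ (φ τ x) (mfderiv I 𝓘(ℝ, ℝ) χ (φ τ x)) :=
        (hχ.mdifferentiableAt one_ne_zero).hasMFDerivAt
      have h3 := h2.comp τ h1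
      rw [hasMFDerivAt_iff_hasFDerivAt] at h3
      have h4 : HasDerivAt (fun σ => χ (φ σ x)) (1 : ℝ) τ := by
        show HasFDerivAt _ _ _
        exact h3.congr_fderiv (by
          ext
          change mfderiv I 𝓘(ℝ, ℝ) χ (φ τ x) ((1 : ℝ) • u (φ τ x)) = (1 : ℝ) • (1 : ℝ)
          rw [one_smul, one_smul]
          exact hdχ (φ τ x))
      convert h4.sub (hasDerivAt_id τ) using 1
      · rfl
      · rfl
      · rfl
      · norm_num
    have hconst : (fun σ => χ (φ σ x) - σ) t = (fun σ => χ (φ σ x) - σ) 0 :=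
      is_const_of_deriv_eq_zero (fun τ => (hderiv τ).differentiableAt)
        (fun τ => (hderiv τ).deriv) t 0
    simp only [hφ0, sub_zero] at hconst
    linarith
  constructor
  · rintro ⟨s, x, hx⟩ ⟨t, y, hy⟩ h
    simp only [Set.mem_preimage, Set.mem_singleton_iff] at hx hy
    simp only at h
    have hst : s = t := by
      have := congrArg χ h
      rw [key x s, key y t, hx, hy] at this
      linarith
    subst hst
    have hxy : x = y := by
      have := congrArg (φ (-s)) h
      rw [← hφadd, ← hφadd, neg_add_cancel, hφ0, hφ0] at this
      exact this
    subst hxy; rfl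
  · intro z
    refine ⟨⟨χ z - c, ⟨φ (-(χ z - c)) z, ?_⟩⟩, ?_⟩
    · simp only [Set.mem_preimage, Set.mem_singleton_iff]
      rw [key]; ring
    · simp only
      rw [← hφadd]
      simp [hφ0]
end
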